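/- For $\nu > 1$ and a nonnegative integer $k$, the function $\phi(z) = \cos^\nu(z)\, {}_2F_1(-k, \nu+k; \nu+\tfrac12; \cos^2 z)$ (which is a polynomial in $\cos^2 z$ times $\cos^\nu z$) satisfies the differential equation $-\phi''(z) + \nu(\nu-1)\tan^2(z)\,\phi(z) = \epsilon\,\phi(z)$ on $(-\pi/2, \pi/2)$ with $\epsilon = 4k(\nu+k)+\nu$, and $\phi(\pm\pi/2) = 0$. -/

import Mathlib

/-- Terminating hypergeometric polynomial ₂F₁(-k, b; c; x). -/
noncomputable def hyp2F1term (k : ℕ) (b c x : ℝ) : ℝ :=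
  ∑ j ∈ Finset.range (k + 1),
    ((ascPochhammer ℝ j).eval (-(k : ℝ)) * (ascPochhammer ℝ j).eval b /
      ((ascPochhammer ℝ j).eval c * (Nat.factorial j))) * x ^ j

noncomputable def Qa (ν : ℝ) (k j : ℕ) : ℝ :=
  (ascPochhammer ℝ j).eval (-(k : ℝ)) * (ascPochhammer ℝ j).eval (ν + k) /
    ((ascPochhammer ℝ j).eval (ν + 1 / 2) * (Nat.factorial j))

noncomputable def Q0 (ν : ℝ) (k : ℕ) (u : ℝ) : ℝ :=
  ∑ j ∈ Finset.range (k + 1), Qa ν k j * u ^ j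

noncomputable def Q1 (ν : ℝ) (k : ℕ) (u : ℝ) : ℝ :=
  ∑ j ∈ Finset.range (k + 1), Qa ν k j * ((j : ℝ) * u ^ (j - 1))

noncomputable def Q2 (ν : ℝ) (k : ℕ) (u : ℝ) : ℝ :=
  ∑ j ∈ Finset.range (k + 1), Qa ν k j * ((j : ℝ) * (((j - 1 : ℕ) : ℝ) * u ^ (j - 1 - 1)))

lemma hyp_eq_Q0 (ν : ℝ) (k : ℕ) (u : ℝ) : hyp2F1term k (ν + k) (ν + 1 / 2) u = Q0 ν k u := rfl

lemma hasDerivAt_Q0 (ν : ℝ) (k : ℕ) (u : ℝ) : HasDerivAt (Q0 ν k) (Q1 ν k u) u := by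
  unfold Q0 Q1
  exact HasDerivAt.fun_sum fun j _ => (hasDerivAt_pow j u).const_mul _

lemma hasDerivAt_Q1 (ν : ℝ) (k : ℕ) (u : ℝ) : HasDerivAt (Q1 ν k) (Q2 ν k u) u := by
  unfold Q1 Q2
  exact HasDerivAt.fun_sum fun j _ => ((hasDerivAt_pow (j - 1) u).const_mul (j : ℝ)).const_mul _

lemma Qa_rec (ν : ℝ) (hν : 1 < ν) (k j : ℕ) :
    Qa ν k (j + 1) * (((j : ℝ) + 1) * (ν + 1 / 2 + j)) =
      Qa ν k j * (((j : ℝ) - k) * (ν + k + j)) := by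
  have hp : (0:ℝ) < (ascPochhammer ℝ j).eval (ν + 1 / 2) :=
    ascPochhammer_pos j _ (by linarith)
  have hf : ((Nat.factorial j : ℝ)) ≠ 0 := Nat.cast_ne_zero.mpr (Nat.factorial_ne_zero j)
  have hx : (ν + 1 / 2 + (j:ℝ)) ≠ 0 := by positivity
  have hj1 : ((j:ℝ) + 1) ≠ 0 := by positivity
  unfold Qa
  rw [ascPochhammer_succ_eval, ascPochhammer_succ_eval, ascPochhammer_succ_eval,
    Nat.factorial_succ]
  push_cast
  rw [div_mul_eq_mul_div, div_mul_eq_mul_div, div_eq_div_iff (by positivity) (by positivity)]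
  ring

lemma pow_per_term (ν : ℝ) (k j : ℕ) (u : ℝ) :
    4 * u * (1 - u) * ((j : ℝ) * (((j - 1 : ℕ) : ℝ) * u ^ (j - 1 - 1)))
      + ((4 * ν + 2) - (4 * ν + 4) * u) * ((j : ℝ) * u ^ (j - 1))
      + 4 * k * (ν + k) * u ^ j
    = (4 * (j : ℝ) * ((j : ℝ) - 1) + (4 * ν + 2) * (j : ℝ)) * u ^ (j - 1)
      - 4 * (((j : ℝ) - k) * (ν + k + j)) * u ^ j := by
  match j with
  | 0 => push_cast; ring
  | 1 => push_cast; ring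
  | (n + 2) =>
    show 4 * u * (1 - u) * (((n + 2 : ℕ) : ℝ) * (((n + 1 : ℕ) : ℝ) * u ^ n))
      + ((4 * ν + 2) - (4 * ν + 4) * u) * (((n + 2 : ℕ) : ℝ) * u ^ (n + 1))
      + 4 * k * (ν + k) * u ^ (n + 2)
      = (4 * ((n + 2 : ℕ) : ℝ) * (((n + 2 : ℕ) : ℝ) - 1) + (4 * ν + 2) * ((n + 2 : ℕ) : ℝ)) * u ^ (n + 1)
      - 4 * ((((n + 2 : ℕ) : ℝ) - k) * (ν + k + ((n + 2 : ℕ) : ℝ))) * u ^ (n + 2)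
    push_cast
    ring

lemma key_identity (ν : ℝ) (hν : 1 < ν) (k : ℕ) (u : ℝ) :
    4 * u * (1 - u) * Q2 ν k u + ((4 * ν + 2) - (4 * ν + 4) * u) * Q1 ν k u
      + 4 * k * (ν + k) * Q0 ν k u = 0 := by
  have htop : Qa ν k (k + 1) = 0 := by
    unfold Qa
    rw [ascPochhammer_succ_eval]
    simp
  set d : ℕ → ℝ := fun j =>
    Qa ν k j * ((4 * (j : ℝ) * ((j : ℝ) - 1) + (4 * ν + 2) * (j : ℝ)) * u ^ (j - 1)) with hd
  have hterm : ∀ j ∈ Finset.range (k + 1),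
      4 * u * (1 - u) * (Qa ν k j * ((j : ℝ) * (((j - 1 : ℕ) : ℝ) * u ^ (j - 1 - 1))))
        + ((4 * ν + 2) - (4 * ν + 4) * u) * (Qa ν k j * ((j : ℝ) * u ^ (j - 1)))
        + 4 * k * (ν + k) * (Qa ν k j * u ^ j) = d j - d (j + 1) := by
    intro j _
    have hrec := Qa_rec ν hν k j
    have hdj1 : d (j + 1) = 4 * (Qa ν k j * (((j : ℝ) - k) * (ν + k + j))) * u ^ j := by
      simp only [hd, Nat.add_sub_cancel]
      rw [← hrec]
      push_cast
      ring
    rw [hdj1]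
    simp only [hd]
    linear_combination (Qa ν k j) * pow_per_term ν k j u
  calc 4 * u * (1 - u) * Q2 ν k u + ((4 * ν + 2) - (4 * ν + 4) * u) * Q1 ν k u
      + 4 * k * (ν + k) * Q0 ν k u
      = ∑ j ∈ Finset.range (k + 1),
          (4 * u * (1 - u) * (Qa ν k j * ((j : ℝ) * (((j - 1 : ℕ) : ℝ) * u ^ (j - 1 - 1))))
            + ((4 * ν + 2) - (4 * ν + 4) * u) * (Qa ν k j * ((j : ℝ) * u ^ (j - 1)))
            + 4 * k * (ν + k) * (Qa ν k j * u ^ j)) := by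
        unfold Q0 Q1 Q2
        rw [Finset.mul_sum, Finset.mul_sum, Finset.mul_sum, ← Finset.sum_add_distrib,
          ← Finset.sum_add_distrib]
    _ = ∑ j ∈ Finset.range (k + 1), (d j - d (j + 1)) := Finset.sum_congr rfl hterm
    _ = d 0 - d (k + 1) := Finset.sum_range_sub' d (k + 1)
    _ = 0 := by simp [hd, htop]

noncomputable def psi1 (ν : ℝ) (k : ℕ) (z : ℝ) : ℝ :=
  -Real.sin z * Real.cos z ^ (ν - 1) *
    (ν * Q0 ν k (Real.cos z ^ 2) + 2 * Real.cos z ^ 2 * Q1 ν k (Real.cos z ^ 2))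

noncomputable def psi2 (ν : ℝ) (k : ℕ) (z : ℝ) : ℝ :=
  Real.cos z ^ (ν - 2) *
    ((-(Real.cos z ^ 2) + (ν - 1) * Real.sin z ^ 2) *
        (ν * Q0 ν k (Real.cos z ^ 2) + 2 * Real.cos z ^ 2 * Q1 ν k (Real.cos z ^ 2)) +
      2 * Real.sin z ^ 2 * Real.cos z ^ 2 *
        ((ν + 2) * Q1 ν k (Real.cos z ^ 2) + 2 * Real.cos z ^ 2 * Q2 ν k (Real.cos z ^ 2)))

lemma hasDerivAt_psi (ν : ℝ) (k : ℕ) (z : ℝ) (hc : 0 < Real.cos z) :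
    HasDerivAt (fun z => Real.cos z ^ ν * Q0 ν k (Real.cos z ^ 2)) (psi1 ν k z) z := by
  have hcos := Real.hasDerivAt_cos z
  have h1 : HasDerivAt (fun z => Real.cos z ^ ν)
      (-Real.sin z * ν * Real.cos z ^ (ν - 1)) z := hcos.rpow_const (Or.inl hc.ne')
  have h2 : HasDerivAt (fun z => Real.cos z ^ 2)
      ((2 : ℕ) * Real.cos z ^ (2 - 1) * (-Real.sin z)) z := hcos.pow 2
  have h3 : HasDerivAt (fun z => Q0 ν k (Real.cos z ^ 2))
      (Q1 ν k (Real.cos z ^ 2) * ((2 : ℕ) * Real.cos z ^ (2 - 1) * (-Real.sin z))) z :=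
    by have := (hasDerivAt_Q0 ν k (Real.cos z ^ 2)).comp z h2; exact this
  have h := h1.fun_mul h3
  refine h.congr_deriv ?_
  have hpow : Real.cos z ^ ν = Real.cos z ^ (ν - 1) * Real.cos z := by
    rw [← Real.rpow_add_one hc.ne' (ν - 1), sub_add_cancel]
  rw [psi1, hpow]
  push_cast
  ring

lemma hasDerivAt_psi1 (ν : ℝ) (k : ℕ) (z : ℝ) (hc : 0 < Real.cos z) :
    HasDerivAt (psi1 ν k) (psi2 ν k z) z := by
  have hcos := Real.hasDerivAt_cos z
  have hA : HasDerivAt (fun z => Real.cos z ^ (ν - 1))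
      (-Real.sin z * (ν - 1) * Real.cos z ^ (ν - 1 - 1)) z := hcos.rpow_const (Or.inl hc.ne')
  have hs : HasDerivAt (fun z => -Real.sin z) (-Real.cos z) z := (Real.hasDerivAt_sin z).neg
  have h2 : HasDerivAt (fun z => Real.cos z ^ 2)
      ((2 : ℕ) * Real.cos z ^ (2 - 1) * (-Real.sin z)) z := hcos.pow 2
  have hQ0 : HasDerivAt (fun z => Q0 ν k (Real.cos z ^ 2))
      (Q1 ν k (Real.cos z ^ 2) * ((2 : ℕ) * Real.cos z ^ (2 - 1) * (-Real.sin z))) z :=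
    by have := (hasDerivAt_Q0 ν k (Real.cos z ^ 2)).comp z h2; exact this
  have hQ1 : HasDerivAt (fun z => Q1 ν k (Real.cos z ^ 2))
      (Q2 ν k (Real.cos z ^ 2) * ((2 : ℕ) * Real.cos z ^ (2 - 1) * (-Real.sin z))) z :=
    by have := (hasDerivAt_Q1 ν k (Real.cos z ^ 2)).comp z h2; exact this
  have hD : HasDerivAt
      (fun z => ν * Q0 ν k (Real.cos z ^ 2) + 2 * Real.cos z ^ 2 * Q1 ν k (Real.cos z ^ 2))
      (ν * (Q1 ν k (Real.cos z ^ 2) * ((2 : ℕ) * Real.cos z ^ (2 - 1) * (-Real.sin z))) +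
        ((2 * ((2 : ℕ) * Real.cos z ^ (2 - 1) * (-Real.sin z))) * Q1 ν k (Real.cos z ^ 2) +
          2 * Real.cos z ^ 2 *
            (Q2 ν k (Real.cos z ^ 2) * ((2 : ℕ) * Real.cos z ^ (2 - 1) * (-Real.sin z))))) z :=
    (hQ0.const_mul ν).add ((h2.const_mul 2).mul hQ1)
  have h := (hs.fun_mul hA).fun_mul hD
  have hgoal : psi1 ν k = fun z => (-Real.sin z * Real.cos z ^ (ν - 1)) *
      (ν * Q0 ν k (Real.cos z ^ 2) + 2 * Real.cos z ^ 2 * Q1 ν k (Real.cos z ^ 2)) := by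
    funext w; rw [psi1]
  rw [hgoal]
  refine h.congr_deriv ?_
  have e1 : ν - 1 - 1 = ν - 2 := by ring
  rw [e1]
  have hA' : Real.cos z ^ (ν - 1) = Real.cos z ^ (ν - 2) * Real.cos z := by
    rw [← Real.rpow_add_one hc.ne' (ν - 2)]; congr 1; ring
  rw [psi2, hA']
  push_cast
  ring

theorem gup_oscillator_even_eigenfunctions (ν : ℝ) (hν : 1 < ν) (k : ℕ) :
    let φ : ℝ → ℝ := fun z =>
      Real.cos z ^ ν * hyp2F1term k (ν + k) (ν + 1 / 2) (Real.cos z ^ 2)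
    let ε : ℝ := 4 * k * (ν + k) + ν
    (∀ z ∈ Set.Ioo (-(Real.pi / 2)) (Real.pi / 2),
      -(iteratedDeriv 2 φ z) + ν * (ν - 1) * Real.tan z ^ 2 * φ z = ε * φ z) ∧
    φ (Real.pi / 2) = 0 ∧ φ (-(Real.pi / 2)) = 0 := by
  intro φ ε
  have hν0 : ν ≠ 0 := by linarith
  have hφ : φ = fun z => Real.cos z ^ ν * Q0 ν k (Real.cos z ^ 2) := rfl
  refine ⟨?_, ?_, ?_⟩
  · intro z hz
    have hc : 0 < Real.cos z := Real.cos_pos_of_mem_Ioo hz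
    have hopen : IsOpen {w : ℝ | 0 < Real.cos w} :=
      isOpen_lt continuous_const Real.continuous_cos
    have hmem : {w : ℝ | 0 < Real.cos w} ∈ nhds z := hopen.mem_nhds hc
    have h2deriv : iteratedDeriv 2 φ z = psi2 ν k z := by
      rw [iteratedDeriv_succ, iteratedDeriv_one, hφ]
      have heq : deriv (fun z => Real.cos z ^ ν * Q0 ν k (Real.cos z ^ 2))
          =ᶠ[nhds z] psi1 ν k :=
        Filter.eventually_of_mem hmem fun w hw => (hasDerivAt_psi ν k w hw).deriv
      rw [heq.deriv_eq]
      exact (hasDerivAt_psi1 ν k z hc).deriv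
    rw [h2deriv, hφ]
    have hk2 := key_identity ν hν k (Real.cos z ^ 2)
    have hsin : Real.sin z ^ 2 = 1 - Real.cos z ^ 2 := Real.sin_sq z
    have hpow : Real.cos z ^ ν = Real.cos z ^ (ν - 2) * Real.cos z ^ 2 := by
      rw [sq, ← mul_assoc, ← Real.rpow_add_one hc.ne' (ν - 2),
        ← Real.rpow_add_one hc.ne' (ν - 2 + 1)]
      congr 1; ring
    have htan : ν * (ν - 1) * Real.tan z ^ 2 *
        (Real.cos z ^ ν * Q0 ν k (Real.cos z ^ 2)) =
        ν * (ν - 1) * Real.sin z ^ 2 *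
          (Real.cos z ^ (ν - 2) * Q0 ν k (Real.cos z ^ 2)) := by
      rw [Real.tan_eq_sin_div_cos, div_pow, hpow]
      field_simp
    show -(psi2 ν k z) + ν * (ν - 1) * Real.tan z ^ 2 *
        (Real.cos z ^ ν * Q0 ν k (Real.cos z ^ 2)) =
        ε * (Real.cos z ^ ν * Q0 ν k (Real.cos z ^ 2))
    rw [htan, hpow, psi2, hsin]
    show -(Real.cos z ^ (ν - 2) * _) + _ = (4 * (k:ℝ) * (ν + k) + ν) * _
    linear_combination (-(Real.cos z ^ (ν - 2) * Real.cos z ^ 2)) * hk2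
  · show Real.cos (Real.pi / 2) ^ ν * _ = 0
    rw [Real.cos_pi_div_two, Real.zero_rpow hν0, zero_mul]
  · show Real.cos (-(Real.pi / 2)) ^ ν * _ = 0
    rw [Real.cos_neg, Real.cos_pi_div_two, Real.zero_rpow hν0, zero_mul]
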